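/- Let μ > 0 with μ ≠ 1, and define F(x,y) = x²·y^(−2/μ) − y^(2−2/μ)/(1−μ) on the open upper half-plane {y > 0}. Then F is a first integral of the system ẋ = x² − y², ẏ = μxy: for all x ∈ ℝ and y > 0, (x² − y²)·∂F/∂x(x,y) + μxy·∂F/∂y(x,y) = 0. In particular, for each a ∈ ℝ the curve {x² = a·y^(2/μ) + y²/(1−μ)} is invariant under the phase flow of the system in {y > 0}. -/

import Mathlib

open Real

/-- `F(x,y) = x² y^(−2/μ) − y^(2−2/μ)/(1−μ)` on `{y > 0}`. -/
noncomputable def F (μ x y : ℝ) : ℝ :=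
  x ^ 2 * y ^ (-2 / μ) - y ^ (2 - 2 / μ) / (1 - μ)

lemma hFx (μ x y : ℝ) :
    HasDerivAt (fun x' => F μ x' y) (2 * x * y ^ (-2 / μ)) x := by
  have h := ((hasDerivAt_pow 2 x).mul_const (y ^ (-2 / μ))).sub_const
      (y ^ (2 - 2 / μ) / (1 - μ))
  simpa [F, mul_comm, mul_assoc] using h

lemma hFy (μ x y : ℝ) (hy : 0 < y) :
    HasDerivAt (fun y' => F μ x y')
      (x ^ 2 * (-2 / μ * y ^ (-2 / μ - 1)) -
        (2 - 2 / μ) * y ^ (2 - 2 / μ - 1) / (1 - μ)) y := by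
  have h1 := (Real.hasDerivAt_rpow_const (p := -2 / μ) (Or.inl hy.ne')).const_mul (x ^ 2)
  have h2 := (Real.hasDerivAt_rpow_const (p := 2 - 2 / μ) (Or.inl hy.ne')).div_const (1 - μ)
  simpa [F, Pi.sub_def] using h1.sub h2

lemma key (μ : ℝ) (hμ : 0 < μ) (hμ1 : μ ≠ 1) (x y : ℝ) (hy : 0 < y) :
    (x ^ 2 - y ^ 2) * (2 * x * y ^ (-2 / μ)) +
      μ * x * y * (x ^ 2 * (-2 / μ * y ^ (-2 / μ - 1)) -
        (2 - 2 / μ) * y ^ (2 - 2 / μ - 1) / (1 - μ)) = 0 := by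
  have h1μ : (1 : ℝ) - μ ≠ 0 := sub_ne_zero.mpr (Ne.symm hμ1)
  have e1 : y ^ (-2 / μ - 1) = y ^ (-2 / μ) / y := by
    rw [Real.rpow_sub hy, Real.rpow_one]
  have e2 : y ^ (2 - 2 / μ - 1) = y * y ^ (-2 / μ) := by
    have h : (2 : ℝ) - 2 / μ - 1 = 1 + (-2 / μ) := by ring
    rw [h, Real.rpow_add hy, Real.rpow_one]
  rw [e1, e2]
  field_simp
  ring

lemma curve_iff (μ a x y : ℝ) (hy : 0 < y) :
    x ^ 2 = a * y ^ (2 / μ) + y ^ 2 / (1 - μ) ↔ F μ x y = a := by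
  have einv : y ^ (-2 / μ) * y ^ (2 / μ) = 1 := by
    rw [← Real.rpow_add hy]
    have h : -2 / μ + 2 / μ = (0 : ℝ) := by ring
    rw [h, Real.rpow_zero]
  have e2 : y ^ (2 - 2 / μ) = y ^ 2 * y ^ (-2 / μ) := by
    have h : (2 : ℝ) - 2 / μ = 2 + (-2 / μ) := by ring
    rw [h, Real.rpow_add hy, Real.rpow_two]
  have hF : F μ x y = (x ^ 2 - y ^ 2 / (1 - μ)) * y ^ (-2 / μ) := by
    rw [F, e2]; ring
  rw [hF]
  constructor
  · intro h
    rw [h]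
    have h2 : (a * y ^ (2 / μ) + y ^ 2 / (1 - μ) - y ^ 2 / (1 - μ)) * y ^ (-2 / μ)
        = a * (y ^ (-2 / μ) * y ^ (2 / μ)) := by ring
    rw [h2, einv, mul_one]
  · intro h
    have h2 : (x ^ 2 - y ^ 2 / (1 - μ)) * y ^ (-2 / μ) * y ^ (2 / μ)
        = a * y ^ (2 / μ) := by rw [h]
    have h3 : x ^ 2 - y ^ 2 / (1 - μ) = a * y ^ (2 / μ) := by
      calc x ^ 2 - y ^ 2 / (1 - μ)
          = (x ^ 2 - y ^ 2 / (1 - μ)) * (y ^ (-2 / μ) * y ^ (2 / μ)) := by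
            rw [einv, mul_one]
        _ = a * y ^ (2 / μ) := by rw [← mul_assoc]; exact h2
    linarith

theorem stmt15 (μ : ℝ) (hμ : 0 < μ) (hμ1 : μ ≠ 1) :
    (∀ x y : ℝ, 0 < y →
      (x ^ 2 - y ^ 2) * deriv (fun x' => F μ x' y) x +
        μ * x * y * deriv (fun y' => F μ x y') y = 0) ∧
    (∀ a : ℝ, ∀ x y : ℝ → ℝ,
      (∀ t, HasDerivAt x (x t ^ 2 - y t ^ 2) t) →
      (∀ t, HasDerivAt y (μ * x t * y t) t) →
      (∀ t, 0 < y t) →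
      ∀ t₀ : ℝ, x t₀ ^ 2 = a * y t₀ ^ (2 / μ) + y t₀ ^ 2 / (1 - μ) →
        ∀ t : ℝ, x t ^ 2 = a * y t ^ (2 / μ) + y t ^ 2 / (1 - μ)) := by
  constructor
  · intro x y hy
    rw [(hFx μ x y).deriv, (hFy μ x y hy).deriv]
    exact key μ hμ hμ1 x y hy
  · intro a x y hx hy hypos t₀ h0 t
    set G : ℝ → ℝ := fun t => F μ (x t) (y t) with hG
    have hG' : ∀ t, HasDerivAt G 0 t := by
      intro t
      have A : HasDerivAt (fun s => x s ^ 2) (2 * x t * (x t ^ 2 - y t ^ 2)) t := by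
        simpa [mul_comm, mul_assoc, Pi.pow_def] using (hx t).pow 2
      have B : HasDerivAt (fun s => y s ^ (-2 / μ))
          (-2 / μ * y t ^ (-2 / μ - 1) * (μ * x t * y t)) t :=
        (Real.hasDerivAt_rpow_const (p := -2 / μ) (Or.inl (hypos t).ne')).comp t (hy t)
      have C : HasDerivAt (fun s => y s ^ (2 - 2 / μ))
          ((2 - 2 / μ) * y t ^ (2 - 2 / μ - 1) * (μ * x t * y t)) t :=
        (Real.hasDerivAt_rpow_const (p := 2 - 2 / μ) (Or.inl (hypos t).ne')).comp t (hy t)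
      have D : HasDerivAt G
          (2 * x t * (x t ^ 2 - y t ^ 2) * y t ^ (-2 / μ) +
            x t ^ 2 * (-2 / μ * y t ^ (-2 / μ - 1) * (μ * x t * y t)) -
            (2 - 2 / μ) * y t ^ (2 - 2 / μ - 1) * (μ * x t * y t) / (1 - μ)) t := by
        simpa [hG, F, Pi.sub_def, Pi.mul_def] using (A.mul B).sub (C.div_const (1 - μ))
      convert D using 1
      linear_combination - key μ hμ hμ1 (x t) (y t) (hypos t)
    have hconst : G t = G t₀ := by
      have hdiff : Differentiable ℝ G := fun s => (hG' s).differentiableAt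
      have hz : ∀ s, deriv G s = 0 := fun s => (hG' s).deriv
      exact is_const_of_deriv_eq_zero hdiff hz t t₀
    have hFt₀ : F μ (x t₀) (y t₀) = a := (curve_iff μ a _ _ (hypos t₀)).mp h0
    exact (curve_iff μ a _ _ (hypos t)).mpr (by rw [show F μ (x t) (y t) = G t from rfl, hconst]; exact hFt₀)
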